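/- Let (M_t : t ∈ [0,u]_H) be an (H,u)-decomposition of an (H,u)-perfect pseudo MV-algebra M. The following statements are equivalent: (i) M_0 is a maximal ideal of M; (ii) (H,u) is isomorphic as a unital ordered group to (ℍ,1), where ℍ is a subgroup of the additive group ℝ with 1 ∈ ℍ; (iii) M possesses a unique state s, and M_0 = Ker(s). -/

import Mathlib

open Set

namespace PseudoMV

/-! ### Basic pseudo MV-algebra notions on the interval `Γ(K,v) = [0,v]`
of a (not necessarily abelian) lattice-ordered group `K`. -/

section Defs

variable {K : Type*} [Lattice K] [AddGroup K]

/-- `v` is a strong (order) unit of `K`. -/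
def IsStrongUnit (v : K) : Prop := 0 ≤ v ∧ ∀ x : K, ∃ n : ℕ, x ≤ n • v

/-- The carrier of the pseudo MV-algebra `Γ(K,v)`. -/
def carrier (v : K) : Set K := Set.Icc 0 v

/-- `x ⊕ y = (x + y) ⊓ v`. -/
def oplus (v x y : K) : K := (x + y) ⊓ v

/-- Left negation `x⁻ = v - x`. -/
def negL (v x : K) : K := v - x

/-- Right negation `x~ = -x + v`. -/
def negR (v x : K) : K := -x + v

/-- `x ⊙ y = (x - v + y) ⊔ 0`. -/
def odot (v x y : K) : K := (x - v + y) ⊔ 0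

/-- The partial sum `x + y` is defined in `Γ(K,v)`, i.e. the group sum lies in `[0,v]`. -/
def sumDef (v x y : K) : Prop := 0 ≤ x + y ∧ x + y ≤ v

/-- `n`-fold sum `n.x = x ⊕ ⋯ ⊕ x`. -/
def nOplus (v : K) : ℕ → K → K
  | 0, _ => 0
  | n + 1, x => oplus v (nOplus v n x) x

/-- `ord(x) < ∞`, i.e. some `n ≥ 1` satisfies `n.x = 1`. -/
def OrdFinite (v x : K) : Prop := ∃ n : ℕ, 1 ≤ n ∧ nOplus v n x = v

/-- The set of infinitesimal elements: all `n`-fold partial sums `nx` are defined. -/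
def Infinit (v : K) : Set K := {x | x ∈ carrier v ∧ ∀ n : ℕ, n • x ≤ v}

/-- An ideal of `Γ(K,v)`. -/
structure IsIdeal (v : K) (I : Set K) : Prop where
  subset : I ⊆ carrier v
  nonempty : I.Nonempty
  lower : ∀ a ∈ carrier v, ∀ b ∈ I, a ≤ b → a ∈ I
  oplus_mem : ∀ a ∈ I, ∀ b ∈ I, oplus v a b ∈ I

/-- A normal ideal: `x ⊕ I = I ⊕ x` for every `x`. -/
def IsNormalIdeal (v : K) (I : Set K) : Prop :=
  IsIdeal v I ∧ ∀ x ∈ carrier v, (fun a => oplus v x a) '' I = (fun a => oplus v a x) '' I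

/-- A maximal ideal: proper and not properly contained in a proper ideal. -/
def IsMaximalIdeal (v : K) (I : Set K) : Prop :=
  IsIdeal v I ∧ I ≠ carrier v ∧ ∀ J, IsIdeal v J → I ⊆ J → J ≠ carrier v → J = I

/-- A prime ideal. -/
def IsPrimeIdeal (v : K) (I : Set K) : Prop :=
  IsIdeal v I ∧ ∀ x ∈ carrier v, ∀ y ∈ carrier v, x ⊓ y ∈ I → x ∈ I ∨ y ∈ I

/-- The radical: intersection of all maximal ideals. -/
def Rad (v : K) : Set K := ⋂₀ {I | IsMaximalIdeal v I}

/-- The normal radical: intersection of all maximal ideals that are normal. -/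
def RadN (v : K) : Set K := ⋂₀ {I | IsMaximalIdeal v I ∧ IsNormalIdeal v I}

/-- Membership in the class `𝓜`: every maximal ideal is normal. -/
def MemClassM (v : K) : Prop := ∀ I, IsMaximalIdeal v I → IsNormalIdeal v I

/-- A symmetric pseudo MV-algebra: the two negations coincide. -/
def IsSymmetric (v : K) : Prop := ∀ x ∈ carrier v, negL v x = negR v x

/-- A local pseudo MV-algebra: a unique maximal ideal, which is moreover normal. -/
def IsLocal (v : K) : Prop :=
  ∃ I, IsMaximalIdeal v I ∧ IsNormalIdeal v I ∧ ∀ J, IsMaximalIdeal v J → J = I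

/-- A state on `Γ(K,v)`. -/
structure IsState (v : K) (s : K → ℝ) : Prop where
  maps_to : ∀ x ∈ carrier v, s x ∈ Set.Icc (0 : ℝ) 1
  map_unit : s v = 1
  additive : ∀ x ∈ carrier v, ∀ y ∈ carrier v, sumDef v x y → s (x + y) = s x + s y

/-- The kernel of a state. -/
def stateKer (v : K) (s : K → ℝ) : Set K := {x | x ∈ carrier v ∧ s x = 0}

/-- `x/I = y/I` in the quotient by the (normal) ideal `I`. -/
def quotEq (v : K) (I : Set K) (x y : K) : Prop :=
  oplus v (odot v x (negL v y)) (odot v y (negL v x)) ∈ I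

/-- `x/I ≤ y/I` in the quotient by the (normal) ideal `I`. -/
def quotLE (v : K) (I : Set K) (x y : K) : Prop := odot v x (negL v y) ∈ I

/-- A commutative ideal: a normal ideal with commutative quotient. -/
def IsCommutativeIdeal (v : K) (I : Set K) : Prop :=
  IsNormalIdeal v I ∧ ∀ x ∈ carrier v, ∀ y ∈ carrier v, quotEq v I (oplus v x y) (oplus v y x)

/-- A strict ideal: `x/I < y/I` implies `x < y`. -/
def IsStrictIdeal (v : K) (I : Set K) : Prop :=
  ∀ x ∈ carrier v, ∀ y ∈ carrier v, quotLE v I x y → ¬ quotLE v I y x → x < y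

/-- A retractive (normal) ideal: the canonical projection `π_I : M → M/I` admits a
homomorphic section `δ_I` with `π_I ∘ δ_I = id`.  We encode `δ_I` by the map
`d = δ_I ∘ π_I : M → M`, which must be constant on classes, a homomorphism with respect
to the quotient operations, and a section of `π_I`. -/
def IsRetractive (v : K) (I : Set K) : Prop :=
  ∃ d : K → K,
    (∀ x ∈ carrier v, d x ∈ carrier v) ∧
    (∀ x ∈ carrier v, ∀ y ∈ carrier v, quotEq v I x y → d x = d y) ∧
    (∀ x ∈ carrier v, ∀ y ∈ carrier v, d (oplus v x y) = oplus v (d x) (d y)) ∧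
    (∀ x ∈ carrier v, d (negL v x) = negL v (d x)) ∧
    (∀ x ∈ carrier v, d (negR v x) = negR v (d x)) ∧
    d 0 = 0 ∧ d v = v ∧
    (∀ x ∈ carrier v, quotEq v I (d x) x)

/-- A lexicographic ideal: a nontrivial proper commutative ideal that is strict,
retractive and prime. -/
def IsLexIdeal (v : K) (I : Set K) : Prop :=
  IsCommutativeIdeal v I ∧ I ≠ {0} ∧ I ≠ carrier v ∧
    IsStrictIdeal v I ∧ IsRetractive v I ∧ IsPrimeIdeal v I

/-- A subalgebra of `Γ(K,v)`. -/
def IsSubalgebra (v : K) (S : Set K) : Prop :=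
  S ⊆ carrier v ∧ 0 ∈ S ∧ v ∈ S ∧
    (∀ x ∈ S, ∀ y ∈ S, oplus v x y ∈ S) ∧
    (∀ x ∈ S, negL v x ∈ S) ∧ (∀ x ∈ S, negR v x ∈ S)

/-- The subalgebra generated by a subset. -/
def genSubalg (v : K) (A : Set K) : Set K := ⋂₀ {S | IsSubalgebra v S ∧ A ⊆ S}

end Defs

/-! ### `(H,u)`-decompositions -/

section Decomp

variable {H : Type*} [AddCommGroup H] [LinearOrder H] [IsOrderedAddMonoid H]
variable {K : Type*} [Lattice K] [AddGroup K]

/-- An `(H,u)`-decomposition of the pseudo MV-algebra `Γ(K,v)`. -/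
structure IsDecomposition (u : H) (v : K) (Md : H → Set K) : Prop where
  nonempty : ∀ t ∈ Set.Icc (0 : H) u, (Md t).Nonempty
  subset : ∀ t ∈ Set.Icc (0 : H) u, Md t ⊆ carrier v
  disjoint : ∀ s ∈ Set.Icc (0 : H) u, ∀ t ∈ Set.Icc (0 : H) u, s ≠ t → Md s ∩ Md t = ∅
  cover : ∀ x ∈ carrier v, ∃ t ∈ Set.Icc (0 : H) u, x ∈ Md t
  mono : ∀ s ∈ Set.Icc (0 : H) u, ∀ t ∈ Set.Icc (0 : H) u, s < t →
    ∀ a ∈ Md s, ∀ b ∈ Md t, a ≤ b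
  negL_eq : ∀ t ∈ Set.Icc (0 : H) u, negL v '' Md t = Md (u - t)
  negR_eq : ∀ t ∈ Set.Icc (0 : H) u, negR v '' Md t = Md (u - t)
  oplus_mem : ∀ s ∈ Set.Icc (0 : H) u, ∀ t ∈ Set.Icc (0 : H) u, ∀ x ∈ Md s, ∀ y ∈ Md t,
    oplus v x y ∈ Md (min (s + t) u)

/-- A strong cyclic family for an `(H,u)`-decomposition. -/
def StrongCyclicFamily (u : H) (v : K) (Md : H → Set K) (c : H → K) : Prop :=
  (∀ t ∈ Set.Icc (0 : H) u, c t ∈ Md t ∧ ∀ x : K, c t + x = x + c t) ∧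
  (∀ s ∈ Set.Icc (0 : H) u, ∀ t ∈ Set.Icc (0 : H) u, s + t ≤ u → c s + c t = c (s + t)) ∧
  c u = v

/-- A strong `(H,u)`-perfect pseudo MV-algebra. -/
def IsStrongPerfect (u : H) (v : K) : Prop :=
  ∃ Md c, IsDecomposition u v Md ∧ StrongCyclicFamily u v Md c

/-- A weak cyclic family for an `(H,u)`-decomposition. -/
def WeakCyclicFamily (u : H) (v : K) (Md : H → Set K) (c : H → K) : Prop :=
  c 0 = 0 ∧
  (∀ t ∈ Set.Icc (0 : H) u, c t ∈ Md t ∧ ∀ x : K, c t + x = x + c t) ∧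
  (∀ s ∈ Set.Icc (0 : H) u, ∀ t ∈ Set.Icc (0 : H) u, s + t ≤ u → c s + c t = c (s + t))

end Decomp

/-! ### Isomorphisms -/

section Iso

variable {K : Type*} [Lattice K] [AddGroup K]
variable {K' : Type*} [Lattice K'] [AddGroup K']

/-- An isomorphism of the pseudo MV-algebras `Γ(K,v)` and `Γ(K',v')` (encoded as a map
`K → K'` whose restriction to `[0,v]` is a bijection onto `[0,v']` preserving all
pseudo MV-operations). -/
structure IsPMVIso (v : K) (v' : K') (f : K → K') : Prop where
  maps_to : ∀ x ∈ carrier v, f x ∈ carrier v'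
  inj : ∀ x ∈ carrier v, ∀ y ∈ carrier v, f x = f y → x = y
  surj : ∀ y ∈ carrier v', ∃ x ∈ carrier v, f x = y
  map_zero : f 0 = 0
  map_unit : f v = v'
  map_oplus : ∀ x ∈ carrier v, ∀ y ∈ carrier v, f (oplus v x y) = oplus v' (f x) (f y)
  map_negL : ∀ x ∈ carrier v, f (negL v x) = negL v' (f x)
  map_negR : ∀ x ∈ carrier v, f (negR v x) = negR v' (f x)

/-- The pseudo MV-algebras `Γ(K,v)` and `Γ(K',v')` are isomorphic. -/
def PMVIsomorphic (v : K) (v' : K') : Prop := ∃ f, IsPMVIso v v' f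

end Iso

/-- An isomorphism of lattice-ordered groups: an order isomorphism that is additive. -/
def LGroupIsomorphic (G : Type*) (G' : Type*) [Lattice G] [AddGroup G] [Lattice G']
    [AddGroup G'] : Prop :=
  ∃ e : G ≃o G', ∀ x y : G, e (x + y) = e x + e y

/-! ### The lexicographic product of a linearly ordered group and a lattice-ordered group -/

/-- The lexicographic product `H ×ₗ G`. -/
@[ext]
structure LexProd (H : Type*) (G : Type*) where
  fst : H
  snd : G

namespace LexProd

variable {H : Type*} {G : Type*}

section Group

variable [AddGroup H] [AddGroup G]

instance : Add (LexProd H G) := ⟨fun p q => ⟨p.fst + q.fst, p.snd + q.snd⟩⟩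
instance : Zero (LexProd H G) := ⟨⟨0, 0⟩⟩
instance : Neg (LexProd H G) := ⟨fun p => ⟨-p.fst, -p.snd⟩⟩

instance : AddGroup (LexProd H G) :=
  AddGroup.ofLeftAxioms (fun a b c => LexProd.ext (add_assoc _ _ _) (add_assoc _ _ _))
    (fun a => LexProd.ext (zero_add _) (zero_add _))
    (fun a => LexProd.ext (neg_add_cancel _) (neg_add_cancel _))

@[simp] lemma add_fst (p q : LexProd H G) : (p + q).fst = p.fst + q.fst := rfl
@[simp] lemma add_snd (p q : LexProd H G) : (p + q).snd = p.snd + q.snd := rfl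
@[simp] lemma zero_fst : (0 : LexProd H G).fst = 0 := rfl
@[simp] lemma zero_snd : (0 : LexProd H G).snd = 0 := rfl

end Group

section Order

variable [LinearOrder H] [Lattice G]

instance : PartialOrder (LexProd H G) where
  le p q := p.fst < q.fst ∨ (p.fst = q.fst ∧ p.snd ≤ q.snd)
  le_refl p := Or.inr ⟨rfl, le_rfl⟩
  le_trans p q r := by
    rintro (h | ⟨h1, h2⟩) (h' | ⟨h1', h2'⟩)
    · exact Or.inl (h.trans h')
    · exact Or.inl (h1' ▸ h)
    · exact Or.inl (h1 ▸ h')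
    · exact Or.inr ⟨h1.trans h1', h2.trans h2'⟩
  le_antisymm p q := by
    rintro (h | ⟨h1, h2⟩) (h' | ⟨h1', h2'⟩)
    · exact absurd (h.trans h') (lt_irrefl _)
    · exact absurd h (h1' ▸ lt_irrefl _)
    · exact absurd h' (h1 ▸ lt_irrefl _)
    · exact LexProd.ext h1 (le_antisymm h2 h2')

lemma le_def {p q : LexProd H G} :
    p ≤ q ↔ p.fst < q.fst ∨ (p.fst = q.fst ∧ p.snd ≤ q.snd) := Iff.rfl

instance : Lattice (LexProd H G) :=
  { (inferInstance : PartialOrder (LexProd H G)) with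
    sup := fun p q =>
      if p.fst < q.fst then q else if q.fst < p.fst then p else ⟨p.fst, p.snd ⊔ q.snd⟩
    inf := fun p q =>
      if p.fst < q.fst then p else if q.fst < p.fst then q else ⟨p.fst, p.snd ⊓ q.snd⟩
    le_sup_left := fun p q => by
      try dsimp only
      split_ifs with h1 h2
      · exact Or.inl h1
      · exact le_rfl
      · exact Or.inr ⟨rfl, le_sup_left⟩
    le_sup_right := fun p q => by
      try dsimp only
      split_ifs with h1 h2
      · exact le_rfl
      · exact Or.inl h2
      · exact Or.inr ⟨le_antisymm (not_lt.mp h1) (not_lt.mp h2), le_sup_right⟩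
    sup_le := fun p q r hp hq => by
      try dsimp only
      split_ifs with h1 h2
      · exact hq
      · exact hp
      · have hfq : p.fst = q.fst := le_antisymm (not_lt.mp h2) (not_lt.mp h1)
        rcases hp with hp | ⟨hp1, hp2⟩
        · exact Or.inl hp
        · rcases hq with hq | ⟨hq1, hq2⟩
          · exact Or.inl (lt_of_eq_of_lt hfq hq)
          · exact Or.inr ⟨hp1, sup_le hp2 hq2⟩
    inf_le_left := fun p q => by
      try dsimp only
      split_ifs with h1 h2
      · exact le_rfl
      · exact Or.inl h2
      · exact Or.inr ⟨rfl, inf_le_left⟩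
    inf_le_right := fun p q => by
      try dsimp only
      split_ifs with h1 h2
      · exact Or.inl h1
      · exact le_rfl
      · exact Or.inr ⟨le_antisymm (not_lt.mp h2) (not_lt.mp h1), inf_le_right⟩
    le_inf := fun p q r hq hr => by
      try dsimp only
      split_ifs with h1 h2
      · exact hq
      · exact hr
      · have hfq : q.fst = r.fst := le_antisymm (not_lt.mp h2) (not_lt.mp h1)
        rcases hq with hq | ⟨hq1, hq2⟩
        · exact Or.inl hq
        · rcases hr with hr | ⟨hr1, hr2⟩
          · exact Or.inl (lt_of_lt_of_eq hr hfq.symm)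
          · exact Or.inr ⟨hq1, le_inf hq2 hr2⟩ }

end Order

section Covariant

variable [AddCommGroup H] [LinearOrder H] [IsOrderedAddMonoid H] [Lattice G] [AddGroup G]
  [CovariantClass G G (· + ·) (· ≤ ·)] [CovariantClass G G (Function.swap (· + ·)) (· ≤ ·)]

instance : CovariantClass (LexProd H G) (LexProd H G) (· + ·) (· ≤ ·) := by
  constructor
  rintro a x y (h | ⟨h1, h2⟩)
  · exact Or.inl (add_lt_add_right h a.fst)
  · exact Or.inr ⟨by simp [h1], add_le_add_right h2 a.snd⟩

instance : CovariantClass (LexProd H G) (LexProd H G) (Function.swap (· + ·)) (· ≤ ·) := by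
  constructor
  rintro a x y (h | ⟨h1, h2⟩)
  · exact Or.inl (add_lt_add_left h a.fst)
  · exact Or.inr ⟨by simp [h1], add_le_add_left h2 a.snd⟩

end Covariant

end LexProd

/-! ### Bundled lattice-ordered groups and linearly ordered unital abelian groups -/

universe u

/-- A bundled (not necessarily abelian) lattice-ordered group. -/
structure LGroupS : Type (u + 1) where
  carrier : Type u
  [lat : Lattice carrier]
  [grp : AddGroup carrier]
  [cov_left : CovariantClass carrier carrier (· + ·) (· ≤ ·)]
  [cov_right : CovariantClass carrier carrier (Function.swap (· + ·)) (· ≤ ·)]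

attribute [instance] LGroupS.lat LGroupS.grp LGroupS.cov_left LGroupS.cov_right

/-- A bundled linearly ordered abelian group with a strong unit. -/
structure LoGroupU : Type (u + 1) where
  carrier : Type u
  [strGrp : AddCommGroup carrier]
  [strOrd : LinearOrder carrier]
  [strIsOrd : IsOrderedAddMonoid carrier]
  unit : carrier
  isStrongUnit : IsStrongUnit unit

attribute [instance] LoGroupU.strGrp LoGroupU.strOrd LoGroupU.strIsOrd

/-- A lexicographic pseudo MV-algebra: one isomorphic to `Γ(H ×ₗ G, (u,0))` for some
linearly ordered abelian group `H` with strong unit `u` and some ℓ-group `G`. -/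
def IsLexicographicPMV.{u₁, u₂, u₃} {K : Type u₃} [Lattice K] [AddGroup K] (v : K) : Prop :=
  ∃ (Hs : LoGroupU.{u₁}) (Gs : LGroupS.{u₂}),
    PMVIsomorphic v (LexProd.mk Hs.unit (0 : Gs.carrier))

end PseudoMV

namespace StmtAux

variable {H : Type*} [AddCommGroup H] [LinearOrder H] [IsOrderedAddMonoid H]

section Holder
variable [Archimedean H]

/-- rational approximations from below -/
def rset (u x : H) : Set ℝ :=
  {r : ℝ | ∃ (p : ℤ) (q : ℕ), 0 < q ∧ r = (p : ℝ) / (q : ℝ) ∧ p • u ≤ (q : ℤ) • x}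

noncomputable def hol (u x : H) : ℝ := sSup (rset u x)

variable {u : H} (hu : 0 < u)

include hu

lemma rset_nonempty (x : H) : (rset u x).Nonempty := by
  obtain ⟨n, hn⟩ := Archimedean.arch (-x) hu
  refine ⟨((-n : ℤ) : ℝ) / ((1:ℕ) : ℝ), -n, 1, one_pos, rfl, ?_⟩
  have : -((n:ℤ) • u) ≤ x := by
    rw [neg_le]
    simpa [natCast_zsmul] using hn
  simpa [neg_zsmul] using this

lemma rset_bddAbove (x : H) : BddAbove (rset u x) := by
  obtain ⟨m, hm⟩ := Archimedean.arch x hu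
  refine ⟨(m : ℝ), ?_⟩
  rintro r ⟨p, q, hq, rfl, hle⟩
  have h2 : (q : ℤ) • x ≤ ((q * m : ℕ) : ℤ) • u := by
    have hm' : x ≤ (m:ℤ) • u := by simpa [natCast_zsmul] using hm
    calc (q:ℤ) • x ≤ (q:ℤ) • ((m:ℤ) • u) := zsmul_le_zsmul_right (Int.natCast_nonneg q) hm'
    _ = ((q*m : ℕ) : ℤ) • u := by push_cast; rw [mul_smul]
  have hple : p ≤ ((q*m : ℕ) : ℤ) := (zsmul_le_zsmul_iff_left hu).mp (hle.trans h2)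
  have hq' : (0:ℝ) < (q:ℝ) := by exact_mod_cast hq
  rw [div_le_iff₀ hq']
  calc ((p:ℝ)) ≤ ((q*m : ℕ) : ℤ) := by exact_mod_cast hple
  _ = (m:ℝ) * (q:ℝ) := by push_cast; ring

lemma hol_ge {x : H} {p : ℤ} {q : ℕ} (hq : 0 < q) (h : p • u ≤ (q : ℤ) • x) :
    (p : ℝ) / (q : ℝ) ≤ hol u x :=
  le_csSup (rset_bddAbove hu x) ⟨p, q, hq, rfl, h⟩

lemma hol_le {x : H} {p : ℤ} {q : ℕ} (hq : 0 < q) (h : (q : ℤ) • x ≤ p • u) :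
    hol u x ≤ (p : ℝ) / (q : ℝ) := by
  refine csSup_le (rset_nonempty hu x) ?_
  rintro r ⟨p', q', hq', rfl, h'⟩
  have key : ((q:ℤ) * p') • u ≤ ((q':ℤ) * p) • u := by
    calc ((q:ℤ) * p') • u = (q:ℤ) • (p' • u) := mul_smul _ _ _
    _ ≤ (q:ℤ) • ((q':ℤ) • x) := zsmul_le_zsmul_right (Int.natCast_nonneg q) h'
    _ = (q':ℤ) • ((q:ℤ) • x) := smul_comm _ _ _
    _ ≤ (q':ℤ) • (p • u) := zsmul_le_zsmul_right (Int.natCast_nonneg q') h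
    _ = ((q':ℤ) * p) • u := (mul_smul _ _ _).symm
  have hint : (q:ℤ) * p' ≤ (q':ℤ) * p := (zsmul_le_zsmul_iff_left hu).mp key
  have hq0 : (0:ℝ) < (q:ℝ) := by exact_mod_cast hq
  have hq0' : (0:ℝ) < (q':ℝ) := by exact_mod_cast hq'
  rw [div_le_div_iff₀ hq0' hq0]
  have : ((q:ℝ)) * (p':ℝ) ≤ ((q':ℝ)) * (p:ℝ) := by exact_mod_cast hint
  linarith

lemma hol_near (x : H) (q : ℕ) (hq : 0 < q) :
    ∃ p : ℤ, p • u ≤ (q:ℤ) • x ∧ (q:ℤ) • x < (p+1) • u ∧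
      (p : ℝ) / q ≤ hol u x ∧ hol u x ≤ ((p:ℝ)+1) / q := by
  obtain ⟨p, ⟨h1, h2⟩, -⟩ := existsUnique_zsmul_near_of_pos hu ((q:ℤ) • x)
  refine ⟨p, h1, h2, hol_ge hu hq h1, ?_⟩
  have := hol_le hu hq h2.le
  simpa using this

lemma hol_add (x y : H) : hol u (x + y) = hol u x + hol u y := by
  have key : ∀ q : ℕ, 0 < q →
      hol u x + hol u y ≤ hol u (x+y) + 2/q ∧ hol u (x+y) ≤ hol u x + hol u y + 2/q := by
    intro q hq
    obtain ⟨p₁, ha1, hb1, hc1, hd1⟩ := hol_near hu x q hq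
    obtain ⟨p₂, ha2, hb2, hc2, hd2⟩ := hol_near hu y q hq
    have hq0 : (0:ℝ) < (q:ℝ) := by exact_mod_cast hq
    constructor
    · have hlow : ((p₁ + p₂ : ℤ) : ℝ) / q ≤ hol u (x+y) := by
        refine hol_ge hu hq ?_
        rw [add_zsmul, smul_add]
        exact add_le_add ha1 ha2
      have hsum : hol u x + hol u y ≤ ((p₁:ℝ)+1)/q + ((p₂:ℝ)+1)/q := add_le_add hd1 hd2
      have heq : ((p₁:ℝ)+1)/q + ((p₂:ℝ)+1)/q = ((p₁ + p₂ : ℤ) : ℝ) / q + 2/q := by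
        push_cast; field_simp; ring
      linarith
    · have hup : hol u (x+y) ≤ ((p₁ + p₂ + 2 : ℤ) : ℝ) / q := by
        refine hol_le hu hq ?_
        have : (q:ℤ) • (x + y) < (p₁ + p₂ + 2) • u := by
          rw [smul_add]
          calc (q:ℤ) • x + (q:ℤ) • y < (p₁+1) • u + (p₂+1) • u := by
                exact add_lt_add hb1 hb2
          _ = (p₁ + p₂ + 2) • u := by rw [← add_zsmul]; ring_nf
        exact this.le
      calc hol u (x+y) ≤ ((p₁ + p₂ + 2 : ℤ) : ℝ) / q := hup
      _ = (p₁:ℝ)/q + (p₂:ℝ)/q + 2/q := by push_cast; ring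
      _ ≤ hol u x + hol u y + 2/q := by
          have := add_le_add hc1 hc2; linarith
  have h2q : ∀ ε : ℝ, 0 < ε → ∃ q : ℕ, 0 < q ∧ 2/(q:ℝ) < ε := by
    intro ε hε
    obtain ⟨n, hn⟩ := exists_nat_gt (2/ε)
    refine ⟨n+1, Nat.succ_pos _, ?_⟩
    have hn1 : (2/ε) < ((n+1 : ℕ):ℝ) := by push_cast; push_cast at hn; linarith
    have hpos : (0:ℝ) < ((n+1:ℕ):ℝ) := by positivity
    have h2 := (div_lt_iff₀ hε).mp hn1
    rw [div_lt_iff₀ hpos]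
    linarith [mul_comm ε (((n+1:ℕ)):ℝ)]
  apply le_antisymm
  · refine le_of_forall_pos_le_add fun ε hε => ?_
    obtain ⟨q, hq, hlt⟩ := h2q ε hε
    have := (key q hq).2
    linarith
  · refine le_of_forall_pos_le_add fun ε hε => ?_
    obtain ⟨q, hq, hlt⟩ := h2q ε hε
    have := (key q hq).1
    linarith

lemma hol_unit : hol u u = 1 := by
  apply le_antisymm
  · have := hol_le hu (x := u) (p := 1) (q := 1) one_pos (by norm_num)
    simpa using this
  · have := hol_ge hu (x := u) (p := 1) (q := 1) one_pos (by norm_num)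
    simpa using this

lemma hol_pos {x : H} (hx : 0 < x) : 0 < hol u x := by
  obtain ⟨n, hn⟩ := Archimedean.arch u hx
  have hn0 : 0 < n := by
    rcases Nat.eq_zero_or_pos n with h | h
    · subst h; simp at hn; exact absurd (hu.trans_le hn) (lt_irrefl _)
    · exact h
  have := hol_ge hu (p := 1) (q := n) hn0 (by simpa [natCast_zsmul] using hn)
  have hq0 : (0:ℝ) < (n:ℝ) := by exact_mod_cast hn0
  calc (0:ℝ) < 1/(n:ℝ) := by positivity
  _ ≤ hol u x := by simpa using this

lemma hol_mono {x y : H} (h : x ≤ y) : hol u x ≤ hol u y := by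
  apply csSup_le_csSup (rset_bddAbove hu y) (rset_nonempty hu x)
  rintro r ⟨p, q, hq, rfl, hle⟩
  exact ⟨p, q, hq, rfl, hle.trans (zsmul_le_zsmul_right (Int.natCast_nonneg q) h)⟩

lemma hol_le_iff (a b : H) : a ≤ b ↔ hol u a ≤ hol u b := by
  constructor
  · exact hol_mono hu
  · intro h
    by_contra hab
    push_neg at hab
    have hpos : 0 < hol u (a - b) := hol_pos hu (by simpa using hab)
    have hba : b + (a - b) = a := by abel
    have : hol u a = hol u b + hol u (a - b) := by
      rw [← hol_add hu, hba]
    linarith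

end Holder

/-- Hölder: archimedean linearly ordered abelian group with strong positive element embeds
into ℝ normalized. -/
lemma holder_embedding {u : H} (hu : 0 < u) (harch : ∀ x y : H, 0 < y → ∃ n : ℕ, x ≤ n • y) :
    ∃ f : H →+ ℝ, (∀ a b : H, a ≤ b ↔ f a ≤ f b) ∧ f u = 1 := by
  haveI : Archimedean H := ⟨fun x {y} hy => harch x y hy⟩
  exact ⟨AddMonoidHom.mk' (hol u) (hol_add hu), fun a b => hol_le_iff hu a b, hol_unit hu⟩

end StmtAux
set_option linter.unusedSectionVars false
set_option linter.unusedVariables false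

namespace StmtAux

open PseudoMV Set

section Decomp

variable {H : Type*} [AddCommGroup H] [LinearOrder H] [IsOrderedAddMonoid H] {K : Type*} [Lattice K] [AddGroup K]
  [CovariantClass K K (· + ·) (· ≤ ·)] [CovariantClass K K (Function.swap (· + ·)) (· ≤ ·)]
  {u : H} {v : K} {Md : H → Set K}

lemma mem_carrier {x : K} : x ∈ carrier v ↔ 0 ≤ x ∧ x ≤ v := Set.mem_Icc

lemma class_unique (hMd : IsDecomposition u v Md) {x : K} {s t : H}
    (hs : s ∈ Set.Icc (0:H) u) (ht : t ∈ Set.Icc (0:H) u)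
    (hxs : x ∈ Md s) (hxt : x ∈ Md t) : s = t := by
  by_contra hne
  have := hMd.disjoint s hs t ht hne
  exact absurd (Set.mem_inter hxs hxt) (by simp [this])

open Classical in
/-- the class index of an element -/
noncomputable def tau (u : H) (Md : H → Set K) (x : K) : H :=
  if h : ∃ t ∈ Set.Icc (0:H) u, x ∈ Md t then h.choose else 0

lemma tau_spec (hMd : IsDecomposition u v Md) {x : K} (hx : x ∈ carrier v) :
    tau u Md x ∈ Set.Icc (0:H) u ∧ x ∈ Md (tau u Md x) := by
  have h := hMd.cover x hx
  unfold tau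
  rw [dif_pos h]
  exact ⟨h.choose_spec.1, h.choose_spec.2⟩

lemma tau_eq (hMd : IsDecomposition u v Md) {x : K} {t : H}
    (ht : t ∈ Set.Icc (0:H) u) (hx : x ∈ Md t) : tau u Md x = t := by
  have hxc : x ∈ carrier v := hMd.subset t ht hx
  obtain ⟨h1, h2⟩ := tau_spec hMd hxc
  exact class_unique hMd h1 ht h2 hx

lemma tau_mono (hMd : IsDecomposition u v Md) {x y : K}
    (hx : x ∈ carrier v) (hy : y ∈ carrier v) (hxy : x ≤ y) :
    tau u Md x ≤ tau u Md y := by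
  obtain ⟨hx1, hx2⟩ := tau_spec hMd hx
  obtain ⟨hy1, hy2⟩ := tau_spec hMd hy
  by_contra hlt
  push_neg at hlt
  have hyx : y ≤ x := hMd.mono _ hy1 _ hx1 hlt y hy2 x hx2
  have hxyeq : x = y := le_antisymm hxy hyx
  subst hxyeq
  exact absurd (class_unique hMd hx1 hy1 hx2 hy2) (ne_of_gt hlt)

lemma zero_mem_class_zero (hMd : IsDecomposition u v Md) (hu0 : 0 ≤ u) (hv0 : 0 ≤ v) :
    (0 : K) ∈ Md 0 := by
  have h0c : (0:K) ∈ carrier v := mem_carrier.mpr ⟨le_rfl, hv0⟩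
  obtain ⟨ht1, ht2⟩ := tau_spec hMd h0c
  rcases eq_or_lt_of_le ht1.1 with h | h
  · rwa [← h] at ht2
  · obtain ⟨a, ha⟩ := hMd.nonempty 0 ⟨le_rfl, hu0⟩
    have ha0 : 0 ≤ a := (mem_carrier.mp (hMd.subset 0 ⟨le_rfl, hu0⟩ ha)).1
    have hle : a ≤ 0 := hMd.mono 0 ⟨le_rfl, hu0⟩ _ ht1 h a ha 0 ht2
    have : a = 0 := le_antisymm hle ha0
    subst this
    have := class_unique hMd ⟨le_rfl, hu0⟩ ht1 ha ht2
    rw [← this] at ht2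
    exact ht2

lemma negL_mem (hMd : IsDecomposition u v Md) {x : K} {t : H}
    (ht : t ∈ Set.Icc (0:H) u) (hx : x ∈ Md t) : negL v x ∈ Md (u - t) := by
  rw [← hMd.negL_eq t ht]
  exact ⟨x, hx, rfl⟩

lemma negR_mem (hMd : IsDecomposition u v Md) {x : K} {t : H}
    (ht : t ∈ Set.Icc (0:H) u) (hx : x ∈ Md t) : negR v x ∈ Md (u - t) := by
  rw [← hMd.negR_eq t ht]
  exact ⟨x, hx, rfl⟩

lemma v_mem_class_u (hMd : IsDecomposition u v Md) (hu0 : 0 ≤ u) (hv0 : 0 ≤ v) :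
    v ∈ Md u := by
  have := negL_mem hMd ⟨le_rfl, hu0⟩ (zero_mem_class_zero hMd hu0 hv0)
  simpa [negL] using this

lemma negR_carrier {x : K} (hx : x ∈ carrier v) : negR v x ∈ carrier v := by
  obtain ⟨h1, h2⟩ := mem_carrier.mp hx
  refine mem_carrier.mpr ⟨?_, ?_⟩
  · have : -x + x ≤ -x + v := add_le_add_right h2 _
    simpa [negR] using this
  · have : -x + v ≤ 0 + v := add_le_add_left (Left.neg_nonpos_iff.mpr h1) v
    simpa [negR] using this

lemma oplus_carrier {x y : K} (hx : x ∈ carrier v) (hy : y ∈ carrier v) :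
    oplus v x y ∈ carrier v := by
  obtain ⟨h1, h2⟩ := mem_carrier.mp hx
  obtain ⟨h3, h4⟩ := mem_carrier.mp hy
  exact mem_carrier.mpr ⟨le_inf (Left.add_nonneg h1 h3) (h3.trans h4), inf_le_right⟩

end Decomp

end StmtAux
namespace StmtAux

open PseudoMV Set

section Decomp2

variable {H : Type*} [AddCommGroup H] [LinearOrder H] [IsOrderedAddMonoid H] {K : Type*} [Lattice K] [AddGroup K]
  [CovariantClass K K (· + ·) (· ≤ ·)] [CovariantClass K K (Function.swap (· + ·)) (· ≤ ·)]
  {u : H} {v : K} {Md : H → Set K}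

/-- if the group sum of two elements of the carrier stays in the carrier, its class is the
sum of the classes -/
lemma tau_add (hMd : IsDecomposition u v Md) {x y : K}
    (hx : x ∈ carrier v) (hy : y ∈ carrier v) (hxy0 : 0 ≤ x + y) (hxyv : x + y ≤ v) :
    tau u Md x + tau u Md y ∈ Set.Icc (0:H) u ∧ x + y ∈ Md (tau u Md x + tau u Md y) := by
  obtain ⟨hxI, hxm⟩ := tau_spec hMd hx
  obtain ⟨hyI, hym⟩ := tau_spec hMd hy
  -- x ≤ negL v y
  have hxle : x ≤ negL v y := by
    have := add_le_add_right hxyv (-y)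
    simpa [negL, sub_eq_add_neg, add_assoc] using this
  have hnegL : negL v y ∈ Md (u - tau u Md y) := negL_mem hMd hyI hym
  have hnegLI : u - tau u Md y ∈ Set.Icc (0:H) u := by
    constructor
    · simpa using hyI.2
    · simpa using hyI.1
  have hnegLc : negL v y ∈ carrier v := hMd.subset _ hnegLI hnegL
  have htle : tau u Md x ≤ u - tau u Md y := by
    have := tau_mono hMd hx hnegLc hxle
    rwa [tau_eq hMd hnegLI hnegL] at this
  have hsum_le : tau u Md x + tau u Md y ≤ u := by
    have := add_le_add_left htle (tau u Md y)
    simpa [sub_add_cancel] using this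
  have hsumI : tau u Md x + tau u Md y ∈ Set.Icc (0:H) u :=
    ⟨add_nonneg hxI.1 hyI.1, hsum_le⟩
  refine ⟨hsumI, ?_⟩
  have := hMd.oplus_mem _ hxI _ hyI x hxm y hym
  rw [min_eq_left hsum_le] at this
  rwa [oplus, inf_eq_left.mpr hxyv] at this

/-- subtracting an element of a lower class -/
lemma tau_sub (hMd : IsDecomposition u v Md) {x c : K} {t s : H}
    (ht : t ∈ Set.Icc (0:H) u) (hs : s ∈ Set.Icc (0:H) u) (hst : s < t)
    (hx : x ∈ Md t) (hc : c ∈ Md s) :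
    -c + x ∈ carrier v ∧ -c + x ∈ Md (t - s) ∧ c + (-c + x) = x := by
  have hxc : x ∈ carrier v := hMd.subset t ht hx
  have hcc : c ∈ carrier v := hMd.subset s hs hc
  have hcx : c ≤ x := hMd.mono s hs t ht hst c hc x hx
  have h1 : (0:K) ≤ -c + x := by
    have := add_le_add_left hcx (-c)
    simpa using this
  have h2 : -c + x ≤ x := by
    have := add_le_add_right (Left.neg_nonpos_iff.mpr (mem_carrier.mp hcc).1) x
    simpa using this
  have hdc : -c + x ∈ carrier v := mem_carrier.mpr ⟨h1, h2.trans (mem_carrier.mp hxc).2⟩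
  have hcd : c + (-c + x) = x := by rw [← add_assoc]; simp
  obtain ⟨hI, hmem⟩ := tau_add hMd hcc hdc (by rw [hcd]; exact (mem_carrier.mp hxc).1)
    (by rw [hcd]; exact (mem_carrier.mp hxc).2)
  rw [hcd] at hmem
  have hteq : tau u Md c + tau u Md (-c + x) = t :=
    class_unique hMd hI ht hmem hx
  rw [tau_eq hMd hs hc] at hteq
  have : tau u Md (-c + x) = t - s := by rw [← hteq]; abel
  refine ⟨hdc, ?_, hcd⟩
  rw [← this]
  exact (tau_spec hMd hdc).2

end Decomp2

section States

variable {H : Type*} [AddCommGroup H] [LinearOrder H] [IsOrderedAddMonoid H] {K : Type*} [Lattice K] [AddGroup K]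
  [CovariantClass K K (· + ·) (· ≤ ·)] [CovariantClass K K (Function.swap (· + ·)) (· ≤ ·)]
  {u : H} {v : K} {Md : H → Set K} {st : K → ℝ}

lemma state_zero (hv0 : 0 ≤ v) (hst : IsState v st) : st 0 = 0 := by
  have hvc : v ∈ carrier v := mem_carrier.mpr ⟨hv0, le_rfl⟩
  have h0c : (0:K) ∈ carrier v := mem_carrier.mpr ⟨le_rfl, hv0⟩
  have := hst.additive v hvc 0 h0c ⟨by simpa using hv0, by simp⟩
  simp only [add_zero] at this
  rw [hst.map_unit] at this
  linarith [this]

lemma state_nonneg (hst : IsState v st) {x : K} (hx : x ∈ carrier v) : 0 ≤ st x :=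
  (hst.maps_to x hx).1

lemma state_le_one (hst : IsState v st) {x : K} (hx : x ∈ carrier v) : st x ≤ 1 :=
  (hst.maps_to x hx).2

lemma state_mono (hst : IsState v st) {x y : K} (hx : x ∈ carrier v) (hy : y ∈ carrier v)
    (hxy : x ≤ y) : st x ≤ st y := by
  have h1 : (0:K) ≤ -x + y := by
    have := add_le_add_left hxy (-x); simpa using this
  have h2 : -x + y ≤ v := by
    have h2' : -x + y ≤ y := by
      have := add_le_add_right (Left.neg_nonpos_iff.mpr (mem_carrier.mp hx).1) y
      simpa using this
    exact h2'.trans (mem_carrier.mp hy).2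
  have hdc : -x + y ∈ carrier v := mem_carrier.mpr ⟨h1, h2⟩
  have hsum : x + (-x + y) = y := by rw [← add_assoc]; simp
  have := hst.additive x hx _ hdc
    ⟨by rw [hsum]; exact (mem_carrier.mp hy).1, by rw [hsum]; exact (mem_carrier.mp hy).2⟩
  rw [hsum] at this
  have := state_nonneg hst hdc
  linarith [hst.additive x hx _ hdc ⟨by rw [hsum]; exact (mem_carrier.mp hy).1,
    by rw [hsum]; exact (mem_carrier.mp hy).2⟩]

lemma state_subadd (hst : IsState v st) {x y : K} (hx : x ∈ carrier v) (hy : y ∈ carrier v) :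
    st (oplus v x y) ≤ st x + st y := by
  obtain ⟨hx1, hx2⟩ := mem_carrier.mp hx
  obtain ⟨hy1, hy2⟩ := mem_carrier.mp hy
  set c := oplus v x y with hc
  have hcc : c ∈ carrier v := oplus_carrier hx hy
  have hxc : x ≤ c := by
    refine le_inf ?_ hx2
    have := add_le_add_left hy1 x
    simpa using this
  have h1 : (0:K) ≤ -x + c := by
    have := add_le_add_left hxc (-x); simpa using this
  have h2 : -x + c ≤ y := by
    have hcxy : c ≤ x + y := inf_le_left
    have := add_le_add_left hcxy (-x)
    simpa [← add_assoc] using this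
  have hdc : -x + c ∈ carrier v := mem_carrier.mpr ⟨h1, h2.trans hy2⟩
  have hsum : x + (-x + c) = c := by rw [← add_assoc]; simp
  have hadd := hst.additive x hx _ hdc
    ⟨by rw [hsum]; exact (mem_carrier.mp hcc).1, by rw [hsum]; exact (mem_carrier.mp hcc).2⟩
  rw [hsum] at hadd
  have hmono := state_mono hst hdc hy h2
  rw [hc] at hadd ⊢
  linarith

lemma state_compl (hst : IsState v st) {x : K} (hx : x ∈ carrier v) :
    st x + st (negR v x) = 1 := by
  have hnc : negR v x ∈ carrier v := negR_carrier hx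
  have hsum : x + negR v x = v := by rw [negR, ← add_assoc]; simp
  have hv0 : (0:K) ≤ v := le_trans (mem_carrier.mp hx).1 (mem_carrier.mp hx).2
  have := hst.additive x hx _ hnc ⟨by rw [hsum]; exact hv0, by rw [hsum]⟩
  rw [hsum, hst.map_unit] at this
  linarith

end States

end StmtAux
namespace StmtAux

open PseudoMV Set

section Multiples

variable {H : Type*} [AddCommGroup H] [LinearOrder H] [IsOrderedAddMonoid H] {K : Type*} [Lattice K] [AddGroup K]
  [CovariantClass K K (· + ·) (· ≤ ·)] [CovariantClass K K (Function.swap (· + ·)) (· ≤ ·)]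
  {u : H} {v : K} {Md : H → Set K} {st : K → ℝ}

lemma nsmul_exact (hMd : IsDecomposition u v Md) (hu0 : 0 ≤ u) (hv0 : 0 ≤ v)
    (hst : IsState v st) {r : H} {x : K} (hrI : r ∈ Set.Icc (0:H) u) (hx : x ∈ Md r) :
    ∀ n : ℕ, n • r < u →
      n • x ∈ carrier v ∧ n • x ∈ Md (n • r) ∧ st (n • x) = n * st x := by
  have hxc : x ∈ carrier v := hMd.subset r hrI hx
  intro n
  induction n with
  | zero =>
    intro _
    simp only [zero_nsmul, Nat.cast_zero, zero_mul]
    exact ⟨mem_carrier.mpr ⟨le_rfl, hv0⟩, zero_mem_class_zero hMd hu0 hv0,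
      state_zero hv0 hst⟩
  | succ n ih =>
    intro h
    have hle : n • r ≤ (n+1) • r := by
      rw [succ_nsmul]
      exact le_add_of_nonneg_right hrI.1
    obtain ⟨hyc, hym, hyst⟩ := ih (lt_of_le_of_lt hle h)
    set y := n • x with hy
    have hcmp : r < u - n • r := by
      rw [lt_sub_iff_add_lt, add_comm]
      rwa [succ_nsmul] at h
    have hsubI : u - n • r ∈ Set.Icc (0:H) u := by
      constructor
      · rw [sub_nonneg]; exact (lt_of_le_of_lt hle h).le
      · simpa using nsmul_nonneg hrI.1 n
    have hnegm : negR v y ∈ Md (u - n • r) := negR_mem hMd ⟨nsmul_nonneg hrI.1 n,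
      (lt_of_le_of_lt hle h).le⟩ hym
    have hxle : x ≤ negR v y := hMd.mono r hrI _ hsubI hcmp x hx _ hnegm
    have hsum_le : y + x ≤ v := by
      have := add_le_add_right hxle y
      rwa [negR, ← add_assoc, add_neg_cancel, zero_add] at this
    have hsum_0 : (0:K) ≤ y + x :=
      Left.add_nonneg (mem_carrier.mp hyc).1 (mem_carrier.mp hxc).1
    obtain ⟨hsI, hsm⟩ := tau_add hMd hyc hxc hsum_0 hsum_le
    rw [tau_eq hMd ⟨nsmul_nonneg hrI.1 n, (lt_of_le_of_lt hle h).le⟩ hym,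
      tau_eq hMd hrI hx] at hsm
    have hsucc : (n+1) • x = y + x := succ_nsmul x n
    have hsuccr : (n+1) • r = n • r + r := succ_nsmul r n
    refine ⟨?_, ?_, ?_⟩
    · rw [hsucc]; exact mem_carrier.mpr ⟨hsum_0, hsum_le⟩
    · rwa [hsucc, hsuccr]
    · have := hst.additive y hyc x hxc ⟨hsum_0, hsum_le⟩
      rw [hsucc, this, hyst]
      push_cast
      ring

lemma class_zero_state (hMd : IsDecomposition u v Md) (hu1 : 0 < u) (hv0 : 0 ≤ v)
    (hst : IsState v st) {x : K} (hx : x ∈ Md 0) : st x = 0 := by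
  have hxc : x ∈ carrier v := hMd.subset 0 ⟨le_rfl, hu1.le⟩ hx
  have key : ∀ n : ℕ, (n:ℝ) * st x ≤ 1 := by
    intro n
    obtain ⟨hc, -, hs⟩ := nsmul_exact hMd hu1.le hv0 hst ⟨le_rfl, hu1.le⟩ hx n
      (by simpa using hu1)
    rw [← hs]
    exact state_le_one hst hc
  by_contra hne
  have hpos : 0 < st x := lt_of_le_of_ne (state_nonneg hst hxc) (Ne.symm hne)
  obtain ⟨n, hn⟩ := exists_nat_gt (1 / st x)
  have := key n
  rw [div_lt_iff₀ hpos] at hn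
  linarith

lemma class_u_state (hMd : IsDecomposition u v Md) (hu1 : 0 < u) (hv0 : 0 ≤ v)
    (hst : IsState v st) {x : K} (hx : x ∈ Md u) : st x = 1 := by
  have hxc : x ∈ carrier v := hMd.subset u ⟨hu1.le, le_rfl⟩ hx
  have hn : negR v x ∈ Md 0 := by
    have := negR_mem hMd ⟨hu1.le, le_rfl⟩ hx
    simpa using this
  have := state_compl hst hxc
  rw [class_zero_state hMd hu1 hv0 hst hn] at this
  linarith

lemma nOplus_class (hMd : IsDecomposition u v Md) (hu0 : 0 ≤ u) (hv0 : 0 ≤ v)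
    {t : H} {x : K} (htI : t ∈ Set.Icc (0:H) u) (hx : x ∈ Md t) :
    ∀ n : ℕ, nOplus v n x ∈ carrier v ∧ nOplus v n x ∈ Md (min (n • t) u) := by
  have hxc : x ∈ carrier v := hMd.subset t htI hx
  intro n
  induction n with
  | zero =>
    refine ⟨mem_carrier.mpr ⟨le_rfl, hv0⟩, ?_⟩
    simpa [nOplus, min_eq_left hu0] using zero_mem_class_zero hMd hu0 hv0
  | succ n ih =>
    obtain ⟨ihc, ihm⟩ := ih
    have hminI : min (n • t) u ∈ Set.Icc (0:H) u :=
      ⟨le_min (nsmul_nonneg htI.1 n) hu0, min_le_right _ _⟩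
    have hmem := hMd.oplus_mem _ hminI t htI _ ihm x hx
    have heq : min (min (n • t) u + t) u = min ((n+1) • t) u := by
      rcases le_total (n • t) u with h | h
      · rw [min_eq_left h, succ_nsmul]
      · rw [min_eq_right h, min_eq_right (le_add_of_nonneg_right htI.1),
          min_eq_right (h.trans (by rw [succ_nsmul]; exact le_add_of_nonneg_right htI.1))]
    refine ⟨oplus_carrier ihc hxc, ?_⟩
    show oplus v (nOplus v n x) x ∈ Md (min ((n+1) • t) u)
    rwa [heq] at hmem

lemma nOplus_state_le (hMd : IsDecomposition u v Md) (hu0 : 0 ≤ u) (hv0 : 0 ≤ v)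
    (hst : IsState v st) {t : H} {x : K} (htI : t ∈ Set.Icc (0:H) u) (hx : x ∈ Md t) :
    ∀ n : ℕ, st (nOplus v n x) ≤ n * st x := by
  have hxc : x ∈ carrier v := hMd.subset t htI hx
  intro n
  induction n with
  | zero => simp [nOplus, state_zero hv0 hst]
  | succ n ih =>
    have hc := (nOplus_class hMd hu0 hv0 htI hx n).1
    have := state_subadd hst hc hxc
    have h2 : st (nOplus v (n+1) x) ≤ st (nOplus v n x) + st x := this
    push_cast
    linarith

lemma crossing_ge_one (hMd : IsDecomposition u v Md) (hu1 : 0 < u) (hv0 : 0 ≤ v)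
    (hst : IsState v st) {t : H} {x : K} (htI : t ∈ Set.Icc (0:H) u) (hx : x ∈ Md t)
    {n : ℕ} (hn : u ≤ n • t) : 1 ≤ n * st x := by
  have hcls := (nOplus_class hMd hu1.le hv0 htI hx n).2
  rw [min_eq_right hn] at hcls
  have h1 := class_u_state hMd hu1 hv0 hst hcls
  have h2 := nOplus_state_le hMd hu1.le hv0 hst htI hx n
  linarith

end Multiples

end StmtAux
namespace StmtAux

open PseudoMV Set

section Ideals

variable {H : Type*} [AddCommGroup H] [LinearOrder H] [IsOrderedAddMonoid H] {K : Type*} [Lattice K] [AddGroup K]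
  [CovariantClass K K (· + ·) (· ≤ ·)] [CovariantClass K K (Function.swap (· + ·)) (· ≤ ·)]
  {u : H} {v : K} {Md : H → Set K}

lemma md0_isIdeal (hMd : IsDecomposition u v Md) (hu0 : 0 ≤ u) (hv0 : 0 ≤ v) :
    IsIdeal v (Md 0) := by
  constructor
  · exact hMd.subset 0 ⟨le_rfl, hu0⟩
  · exact hMd.nonempty 0 ⟨le_rfl, hu0⟩
  · intro a ha b hb hab
    have hbc : b ∈ carrier v := hMd.subset 0 ⟨le_rfl, hu0⟩ hb
    have h1 := tau_mono hMd ha hbc hab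
    rw [tau_eq hMd ⟨le_rfl, hu0⟩ hb] at h1
    have h2 := (tau_spec hMd ha).1.1
    have : tau u Md a = 0 := le_antisymm h1 h2
    have := (tau_spec hMd ha).2
    rwa [‹tau u Md a = 0›] at this
  · intro a ha b hb
    have := hMd.oplus_mem 0 ⟨le_rfl, hu0⟩ 0 ⟨le_rfl, hu0⟩ a ha b hb
    simpa [min_eq_left hu0] using this

lemma md0_ne_carrier (hMd : IsDecomposition u v Md) (hu1 : 0 < u) (hv0 : 0 ≤ v) :
    Md 0 ≠ carrier v := by
  intro h
  have hv : v ∈ Md 0 := h ▸ (mem_carrier.mpr ⟨hv0, le_rfl⟩)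
  have := class_unique hMd ⟨le_rfl, hu1.le⟩ ⟨hu1.le, le_rfl⟩ hv
    (v_mem_class_u hMd hu1.le hv0)
  exact absurd this.symm (ne_of_gt hu1)

lemma carrier_eq_of_v_mem (hMd : IsDecomposition u v Md) (hv0 : 0 ≤ v) {J : Set K}
    (hJ : IsIdeal v J) (hvJ : v ∈ J) : J = carrier v := by
  apply Set.Subset.antisymm hJ.subset
  intro a ha
  exact hJ.lower a ha v hvJ (mem_carrier.mp ha).2

/-- (★) → Md 0 is a maximal ideal -/
lemma star_to_maximal (hMd : IsDecomposition u v Md) (hv0 : 0 ≤ v) (hu1 : 0 < u)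
    (hstar : ∀ t : H, 0 < t → t ≤ u → ∃ n : ℕ, u ≤ n • t) :
    IsMaximalIdeal v (Md 0) := by
  refine ⟨md0_isIdeal hMd hu1.le hv0, md0_ne_carrier hMd hu1 hv0, ?_⟩
  intro J hJ hsub hne
  apply Set.Subset.antisymm _ hsub
  intro x hxJ
  by_contra hx0
  have hxc : x ∈ carrier v := hJ.subset hxJ
  obtain ⟨htI, htm⟩ := tau_spec hMd hxc
  set t := tau u Md x with ht
  have ht0 : 0 < t := by
    rcases eq_or_lt_of_le htI.1 with h | h
    · exfalso; apply hx0; rwa [← h] at htm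
    · exact h
  obtain ⟨n, hn⟩ := hstar t ht0 htI.2
  -- the n-fold oplus of x lies in J and in class u
  have hnO : ∀ m : ℕ, nOplus v m x ∈ J := by
    intro m
    induction m with
    | zero =>
      have h0 : (0:K) ∈ Md 0 := zero_mem_class_zero hMd hu1.le hv0
      exact hsub h0
    | succ m ih =>
      exact hJ.oplus_mem _ ih x hxJ
  have hcls := (nOplus_class hMd hu1.le hv0 htI htm n).2
  rw [min_eq_right hn] at hcls
  set z := nOplus v n x with hz
  have hzJ : z ∈ J := hnO n
  have hzc : z ∈ carrier v := (nOplus_class hMd hu1.le hv0 htI htm n).1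
  have hnegz : negR v z ∈ Md 0 := by
    have := negR_mem hMd ⟨hu1.le, le_rfl⟩ hcls
    simpa using this
  have hvJ : v ∈ J := by
    have hov : oplus v z (negR v z) = v := by
      rw [oplus, negR, ← add_assoc, add_neg_cancel, zero_add, inf_idem]
    have := hJ.oplus_mem z hzJ _ (hsub hnegz)
    rwa [hov] at this
  exact hne (carrier_eq_of_v_mem hMd hv0 hJ hvJ)

/-- Md 0 maximal → 0 < u -/
lemma maximal_to_upos (hMd : IsDecomposition u v Md) (hu0 : 0 ≤ u) (hv0 : 0 ≤ v)
    (hmax : IsMaximalIdeal v (Md 0)) : 0 < u := by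
  rcases eq_or_lt_of_le hu0 with h | h
  · exfalso
    apply hmax.2.1
    apply Set.Subset.antisymm (hMd.subset 0 ⟨le_rfl, hu0⟩)
    intro x hx
    obtain ⟨htI, htm⟩ := tau_spec hMd hx
    have : tau u Md x = 0 := le_antisymm (h ▸ htI.2) htI.1
    rwa [this] at htm
  · exact h

/-- Md 0 maximal → (★) -/
lemma maximal_to_star (hMd : IsDecomposition u v Md) (hu0 : 0 ≤ u) (hv0 : 0 ≤ v)
    (hmax : IsMaximalIdeal v (Md 0)) :
    ∀ t : H, 0 < t → t ≤ u → ∃ n : ℕ, u ≤ n • t := by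
  have hu1 : 0 < u := maximal_to_upos hMd hu0 hv0 hmax
  intro t ht0 htu
  by_contra hc
  push_neg at hc
  -- the infinitesimal ideal
  set J := {x : K | ∃ s ∈ Set.Icc (0:H) u, x ∈ Md s ∧ ∀ n : ℕ, n • s ≤ u} with hJdef
  have hinft_add : ∀ s s' : H, (∀ n : ℕ, n • s ≤ u) → (∀ n : ℕ, n • s' ≤ u) →
      ∀ n : ℕ, n • (s + s') ≤ u := by
    intro s s' hs hs' n
    rcases le_total s s' with h | h
    · calc n • (s + s') = n • s + n • s' := by rw [smul_add]
      _ ≤ n • s' + n • s' := by gcongr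
      _ = (n + n) • s' := (add_nsmul s' n n).symm
      _ ≤ u := hs' _
    · calc n • (s + s') = n • s + n • s' := by rw [smul_add]
      _ ≤ n • s + n • s := by gcongr
      _ = (n + n) • s := (add_nsmul s n n).symm
      _ ≤ u := hs _
  have hJideal : IsIdeal v J := by
    constructor
    · rintro x ⟨s, hsI, hxm, -⟩
      exact hMd.subset s hsI hxm
    · exact ⟨0, 0, ⟨le_rfl, hu0⟩, zero_mem_class_zero hMd hu0 hv0, by simp [hu0]⟩
    · rintro a ha b ⟨s, hsI, hbm, hsinf⟩ hab
      have hbc : b ∈ carrier v := hMd.subset s hsI hbm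
      obtain ⟨haI, ham⟩ := tau_spec hMd ha
      have h1 : tau u Md a ≤ s := by
        have := tau_mono hMd ha hbc hab
        rwa [tau_eq hMd hsI hbm] at this
      exact ⟨tau u Md a, haI, ham, fun n => le_trans (by gcongr) (hsinf n)⟩
    · rintro a ⟨s, hsI, ham, hsinf⟩ b ⟨s', hsI', hbm, hsinf'⟩
      have hss' := hinft_add s s' hsinf hsinf'
      have hle : s + s' ≤ u := by simpa using hss' 1
      have := hMd.oplus_mem s hsI s' hsI' a ham b hbm
      rw [min_eq_left hle] at this
      exact ⟨s + s', ⟨add_nonneg hsI.1 hsI'.1, hle⟩, this, hss'⟩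
  have hJne : J ≠ carrier v := by
    intro h
    have hv : v ∈ J := h ▸ (mem_carrier.mpr ⟨hv0, le_rfl⟩)
    obtain ⟨s, hsI, hvm, hsinf⟩ := hv
    have hsu : s = u := class_unique hMd hsI ⟨hu0, le_rfl⟩ hvm (v_mem_class_u hMd hu0 hv0)
    have h2 := hsinf 2
    rw [hsu, two_nsmul] at h2
    have h3 : u + u ≤ 0 + u := by simpa using h2
    exact absurd (le_of_add_le_add_right h3) (not_le.mpr hu1)
  have hsub : Md 0 ⊆ J := by
    intro x hx
    exact ⟨0, ⟨le_rfl, hu0⟩, hx, by simp [hu0]⟩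
  have hJeq : J = Md 0 := hmax.2.2 J hJideal hsub hJne
  obtain ⟨x, hxm⟩ := hMd.nonempty t ⟨ht0.le, htu⟩
  have hxJ : x ∈ J := ⟨t, ⟨ht0.le, htu⟩, hxm, fun n => (hc n).le⟩
  rw [hJeq] at hxJ
  have := class_unique hMd ⟨le_rfl, hu0⟩ ⟨ht0.le, htu⟩ hxJ hxm
  exact absurd this.symm (ne_of_gt ht0)

/-- (★) plus strong unit gives the archimedean property of H -/
lemma star_to_arch (hu : IsStrongUnit u) (hu1 : 0 < u)
    (hstar : ∀ t : H, 0 < t → t ≤ u → ∃ n : ℕ, u ≤ n • t) :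
    ∀ x y : H, 0 < y → ∃ n : ℕ, x ≤ n • y := by
  intro x y hy
  set t := min y u with htdef
  have ht0 : 0 < t := lt_min hy hu1
  obtain ⟨m, hm⟩ := hstar t ht0 (min_le_right _ _)
  obtain ⟨k, hk⟩ := hu.2 x
  refine ⟨m * k, ?_⟩
  calc x ≤ k • u := hk
  _ ≤ k • (m • t) := by gcongr
  _ = (m * k) • t := (mul_nsmul t m k).symm
  _ ≤ (m * k) • y := by gcongr; exact min_le_left _ _
end Ideals

end StmtAux
namespace StmtAux

open PseudoMV Set

section Unique

variable {H : Type*} [AddCommGroup H] [LinearOrder H] [IsOrderedAddMonoid H] {K : Type*} [Lattice K] [AddGroup K]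
  [CovariantClass K K (· + ·) (· ≤ ·)] [CovariantClass K K (Function.swap (· + ·)) (· ≤ ·)]
  {u : H} {v : K} {Md : H → Set K} {st : K → ℝ}

lemma f_strict {f : H →+ ℝ} (hf : ∀ a b : H, a ≤ b ↔ f a ≤ f b) {a b : H} (h : a < b) :
    f a < f b := by
  rcases lt_or_ge (f a) (f b) with h' | h'
  · exact h'
  · exact absurd ((hf b a).mpr h') (not_le.mpr h)

lemma f_reflect_lt {f : H →+ ℝ} (hf : ∀ a b : H, a ≤ b ↔ f a ≤ f b) {a b : H}
    (h : f a < f b) : a < b := by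
  rcases lt_or_ge a b with h' | h'
  · exact h'
  · exact absurd ((hf b a).mp h') (not_le.mpr h)

lemma small_elements {f : H →+ ℝ} (hf : ∀ a b : H, a ≤ b ↔ f a ≤ f b) (hfu : f u = 1)
    (hu1 : 0 < u) (hnomin : ∀ t : H, 0 < t → ∃ s : H, 0 < s ∧ s < t) :
    ∀ ε : ℝ, 0 < ε → ∃ r : H, 0 < r ∧ f r < ε := by
  have key : ∀ n : ℕ, ∃ r : H, 0 < r ∧ f r ≤ (1/2 : ℝ)^n := by
    intro n
    induction n with
    | zero => exact ⟨u, hu1, by rw [hfu]; norm_num⟩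
    | succ n ih =>
      obtain ⟨r, hr0, hrn⟩ := ih
      obtain ⟨s, hs0, hsr⟩ := hnomin r hr0
      have hfs0 : 0 < f s := by
        have := f_strict hf hs0
        rwa [map_zero] at this
      have hfsr : f s < f r := f_strict hf hsr
      rcases le_total (f s) (f r / 2) with h | h
      · refine ⟨s, hs0, ?_⟩
        calc f s ≤ f r / 2 := h
        _ ≤ (1/2:ℝ)^n / 2 := by linarith
        _ = (1/2:ℝ)^(n+1) := by rw [pow_succ]; ring
      · refine ⟨r - s, sub_pos.mpr hsr, ?_⟩
        rw [map_sub]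
        calc f r - f s ≤ f r - f r / 2 := by linarith
        _ = f r / 2 := by ring
        _ ≤ (1/2:ℝ)^n / 2 := by linarith
        _ = (1/2:ℝ)^(n+1) := by rw [pow_succ]; ring
  intro ε hε
  obtain ⟨n, hn⟩ := exists_pow_lt_of_lt_one hε (by norm_num : (1/2:ℝ) < 1)
  obtain ⟨r, hr0, hrn⟩ := key n
  exact ⟨r, hr0, lt_of_le_of_lt hrn hn⟩

/-- every element of `[0,u]` is a natural multiple of the least positive element -/
lemma multiple_of_min (harch : ∀ x y : H, 0 < y → ∃ n : ℕ, x ≤ n • y)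
    {t₀ : H} (ht₀ : 0 < t₀) (hmin : ∀ s : H, 0 < s → t₀ ≤ s) {t : H} (ht : 0 ≤ t) :
    ∃ k : ℕ, t = k • t₀ := by
  haveI : Archimedean H := ⟨fun x {y} hy => harch x y hy⟩
  obtain ⟨k, ⟨h1, h2⟩, -⟩ := existsUnique_zsmul_near_of_pos ht₀ t
  have hr0 : 0 ≤ t - k • t₀ := sub_nonneg.mpr h1
  have hrlt : t - k • t₀ < t₀ := by
    rw [sub_lt_iff_lt_add]
    rw [add_zsmul, one_zsmul] at h2
    rwa [add_comm]
  have hreq : t - k • t₀ = 0 := by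
    rcases eq_or_lt_of_le hr0 with h | h
    · exact h.symm
    · exact absurd (hmin _ h) (not_le.mpr hrlt)
  have hteq : t = k • t₀ := by
    have := sub_eq_zero.mp hreq
    exact this
  have hk0 : 0 ≤ k := by
    by_contra hneg
    push_neg at hneg
    have : k • t₀ ≤ (-1) • t₀ := zsmul_le_zsmul_left ht₀.le (by omega)
    rw [neg_zsmul, one_zsmul] at this
    have h0 : t < 0 := lt_of_le_of_lt (hteq ▸ this) (by simpa using ht₀)
    exact absurd ht (not_le.mpr h0)
  refine ⟨k.toNat, ?_⟩
  rw [hteq, ← natCast_zsmul, Int.toNat_of_nonneg hk0]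

/-- Case A (discrete): states are determined on all classes -/
lemma caseA_state_eq (hMd : IsDecomposition u v Md) (hu1 : 0 < u) (hv0 : 0 ≤ v)
    (hst : IsState v st) {f : H →+ ℝ} (hf : ∀ a b : H, a ≤ b ↔ f a ≤ f b) (hfu : f u = 1)
    (harch : ∀ x y : H, 0 < y → ∃ n : ℕ, x ≤ n • y)
    {t₀ : H} (ht₀ : 0 < t₀) (hmin : ∀ s : H, 0 < s → t₀ ≤ s) :
    ∀ t ∈ Set.Icc (0:H) u, ∀ x ∈ Md t, st x = f t := by
  obtain ⟨N, hN⟩ := multiple_of_min harch ht₀ hmin hu1.le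
  have hN1 : 1 ≤ N := by
    by_contra h
    push_neg at h
    interval_cases N
    · rw [zero_nsmul] at hN
      exact absurd hN (ne_of_gt hu1)
  -- class of k•t₀ is in Icc whenever k ≤ N
  have hIcc : ∀ k : ℕ, k ≤ N → k • t₀ ∈ Set.Icc (0:H) u :=
    fun k hk => ⟨nsmul_nonneg ht₀.le k, by rw [hN]; gcongr⟩
  -- k from t
  have hmult : ∀ t ∈ Set.Icc (0:H) u, ∃ k : ℕ, k ≤ N ∧ t = k • t₀ := by
    intro t htI
    obtain ⟨k, hk⟩ := multiple_of_min harch ht₀ hmin htI.1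
    refine ⟨k, ?_, hk⟩
    by_contra h
    push_neg at h
    have : u + t₀ ≤ k • t₀ := by
      calc u + t₀ = (N+1) • t₀ := by rw [succ_nsmul, hN]
      _ ≤ k • t₀ := by gcongr; omega
    have h2 : k • t₀ ≤ u := hk ▸ htI.2
    have h3 : u + t₀ ≤ u + 0 := by simpa using this.trans h2
    exact absurd (le_of_add_le_add_left h3) (not_le.mpr ht₀)
  rcases eq_or_lt_of_le hN1 with hNeq | hN2
  · -- N = 1 : only classes 0 and u
    obtain rfl : N = 1 := hNeq.symm
    rw [one_nsmul] at hN
    intro t htI x hx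
    obtain ⟨k, hkN, hk⟩ := hmult t htI
    interval_cases k
    · rw [zero_nsmul] at hk
      subst hk
      rw [map_zero]
      exact class_zero_state hMd hu1 hv0 hst hx
    · rw [one_nsmul] at hk
      rw [hk, ← hN] at hx ⊢
      rw [hfu]
      exact class_u_state hMd hu1 hv0 hst hx
  · -- N ≥ 2
    obtain ⟨M, hM⟩ : ∃ M : ℕ, N = M + 2 := ⟨N - 2, by omega⟩
    have hsub_u : u - t₀ = (M+1) • t₀ := by
      rw [hN, hM, succ_nsmul t₀ (M+1), add_sub_cancel_right]
    have ht₀I : t₀ ∈ Set.Icc (0:H) u := by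
      have := hIcc 1 (by omega); rwa [one_nsmul] at this
    have hMI : M • t₀ ∈ Set.Icc (0:H) u := hIcc M (by omega)
    have hM1I : (M+1) • t₀ ∈ Set.Icc (0:H) u := hIcc (M+1) (by omega)
    -- (a) all class-t₀ values are comparable
    have hge : ∀ x ∈ Md t₀, ∀ w ∈ Md t₀, st x ≤ st w := by
      intro x hx w hw
      have hxc := hMd.subset _ ht₀I hx
      have hwc := hMd.subset _ ht₀I hw
      have hy : negR v x ∈ Md ((M+1) • t₀) := by
        have := negR_mem hMd ht₀I hx
        rwa [hsub_u] at this
      obtain ⟨c, hc⟩ := hMd.nonempty _ hMI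
      have hslt : M • t₀ < (M+1) • t₀ := by
        rw [succ_nsmul]; exact lt_add_of_pos_right _ ht₀
      obtain ⟨hdc, hdm, hcd⟩ := tau_sub hMd hM1I hMI hslt hy hc
      have hdt : -c + negR v x ∈ Md t₀ := by
        rwa [succ_nsmul, add_sub_cancel_left] at hdm
      have hycar : negR v x ∈ carrier v := negR_carrier hxc
      have hccar := hMd.subset _ hMI hc
      have hadd : st (negR v x) = st c + st (-c + negR v x) := by
        have := hst.additive c hccar _ hdc
          ⟨by rw [hcd]; exact (mem_carrier.mp hycar).1, by rw [hcd]; exact (mem_carrier.mp hycar).2⟩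
        rw [hcd] at this
        exact this
      have hz₁ := hMd.oplus_mem _ hMI _ ht₀I c hc _ hdt
      rw [← succ_nsmul, min_eq_left hM1I.2] at hz₁
      have hz₁c : oplus v c (-c + negR v x) ∈ carrier v := oplus_carrier hccar hdc
      have hz₂ := hMd.oplus_mem _ hM1I _ ht₀I _ hz₁ w hw
      have htop : (M+1) • t₀ + t₀ = u := by rw [← succ_nsmul, ← hM, ← hN]
      rw [htop, min_self] at hz₂
      have hz₂1 : st (oplus v (oplus v c (-c + negR v x)) w) = 1 :=
        class_u_state hMd hu1 hv0 hst hz₂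
      have hsub1 := state_subadd hst hz₁c hwc
      have hsub2 := state_subadd hst hccar hdc
      have hcompl := state_compl hst hxc
      linarith
    have hconst : ∀ x ∈ Md t₀, ∀ w ∈ Md t₀, st x = st w :=
      fun x hx w hw => le_antisymm (hge x hx w hw) (hge w hw x hx)
    obtain ⟨x₀, hx₀⟩ := hMd.nonempty _ ht₀I
    set α := st x₀ with hα
    have hchain : ∀ k : ℕ, k ≤ N → ∀ y ∈ Md (k • t₀), st y = k * α := by
      intro k
      induction k with
      | zero =>
        intro _ y hy
        rw [zero_nsmul] at hy
        simp [class_zero_state hMd hu1 hv0 hst hy]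
      | succ k ih =>
        intro hk y hy
        have hkI := hIcc k (by omega)
        have hk1I := hIcc (k+1) hk
        obtain ⟨c, hc⟩ := hMd.nonempty _ hkI
        have hlt : k • t₀ < (k+1) • t₀ := by
          rw [succ_nsmul]; exact lt_add_of_pos_right _ ht₀
        obtain ⟨hdc, hdm, hcd⟩ := tau_sub hMd hk1I hkI hlt hy hc
        have hdt : -c + y ∈ Md t₀ := by
          rwa [succ_nsmul, add_sub_cancel_left] at hdm
        have hccar := hMd.subset _ hkI hc
        have hycar := hMd.subset _ hk1I hy
        have hadd := hst.additive c hccar _ hdc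
          ⟨by rw [hcd]; exact (mem_carrier.mp hycar).1, by rw [hcd]; exact (mem_carrier.mp hycar).2⟩
        rw [hcd] at hadd
        rw [hadd, ih (by omega) c hc, hconst _ hdt x₀ hx₀, ← hα]
        push_cast
        ring
    have hy₀ : negR v x₀ ∈ Md ((M+1) • t₀) := by
      have := negR_mem hMd ht₀I hx₀
      rwa [hsub_u] at this
    have h1 : st x₀ + st (negR v x₀) = 1 := state_compl hst (hMd.subset _ ht₀I hx₀)
    have h2 : st (negR v x₀) = (M+1 : ℕ) * α := hchain (M+1) (by omega) _ hy₀
    have hNα : (N:ℝ) * α = 1 := by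
      rw [hM]; push_cast; push_cast at h2; linarith
    have hN0 : (0:ℝ) < (N:ℝ) := by exact_mod_cast Nat.pos_of_ne_zero (by omega)
    have hft₀ : (N:ℝ) * f t₀ = 1 := by
      have : f u = (N:ℝ) * f t₀ := by rw [hN, map_nsmul, nsmul_eq_mul]
      rw [hfu] at this
      linarith
    have hval : α = f t₀ := mul_left_cancel₀ (ne_of_gt hN0) (by rw [hNα, hft₀])
    intro t htI x hx
    obtain ⟨k, hkN, hk⟩ := hmult t htI
    subst hk
    rw [hchain k hkN x hx, hval, map_nsmul, nsmul_eq_mul]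

end Unique

end StmtAux
namespace StmtAux

open PseudoMV Set

section UniqueB

variable {H : Type*} [AddCommGroup H] [LinearOrder H] [IsOrderedAddMonoid H] {K : Type*} [Lattice K] [AddGroup K]
  [CovariantClass K K (· + ·) (· ≤ ·)] [CovariantClass K K (Function.swap (· + ·)) (· ≤ ·)]
  {u : H} {v : K} {Md : H → Set K} {st : K → ℝ}

lemma caseB_upper (hMd : IsDecomposition u v Md) (hu1 : 0 < u) (hv0 : 0 ≤ v)
    (hst : IsState v st) {f : H →+ ℝ} (hf : ∀ a b : H, a ≤ b ↔ f a ≤ f b) (hfu : f u = 1)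
    (harch : ∀ x y : H, 0 < y → ∃ n : ℕ, x ≤ n • y)
    (hsmall : ∀ ε : ℝ, 0 < ε → ∃ r : H, 0 < r ∧ f r < ε) :
    ∀ t ∈ Set.Icc (0:H) u, t < u → ∀ x ∈ Md t, st x ≤ f t := by
  haveI : Archimedean H := ⟨fun x {y} hy => harch x y hy⟩
  intro t htI htu x hx
  have hxc := hMd.subset _ htI hx
  have hft0 : 0 ≤ f t := by
    have := (hf 0 t).mp htI.1; rwa [map_zero] at this
  have hft1 : f t < 1 := by
    have := f_strict hf htu; rwa [hfu] at this
  refine le_of_forall_pos_le_add ?_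
  intro ε hε
  set δ : ℝ := min (ε/4) (min (1/2) ((1 - f t)/2)) with hδdef
  have hδ0 : 0 < δ := lt_min (by linarith) (lt_min (by norm_num) (by linarith))
  have hδε : δ ≤ ε/4 := min_le_left _ _
  have hδhalf : δ ≤ 1/2 := (min_le_right _ _).trans (min_le_left _ _)
  have hδft : δ ≤ (1 - f t)/2 := (min_le_right _ _).trans (min_le_right _ _)
  obtain ⟨r, hr0, hrδ⟩ := hsmall δ hδ0
  have hfr0 : 0 < f r := by
    have := f_strict hf hr0; rwa [map_zero] at this
  have hru : r < u := f_reflect_lt hf (by rw [hfu]; linarith)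
  -- m' with m'•r < u ≤ (m'+1)•r
  obtain ⟨m, ⟨hm1, hm2⟩, -⟩ := existsUnique_zsmul_near_of_pos hr0 u
  obtain ⟨m', hM1, hM2⟩ : ∃ m' : ℤ, m' • r < u ∧ u ≤ (m'+1) • r := by
    rcases eq_or_lt_of_le hm1 with heq | hlt
    · refine ⟨m - 1, ?_, ?_⟩
      · rw [sub_zsmul, one_zsmul, heq]
        simpa [sub_eq_add_neg] using sub_lt_self u hr0
      · rw [sub_add_cancel, heq]
    · exact ⟨m, hlt, hm2.le⟩
  have hm'1 : 1 ≤ m' := by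
    by_contra h
    push_neg at h
    have h2 : (m'+1) • r ≤ (1:ℤ) • r := zsmul_le_zsmul_left hr0.le (show m' + 1 ≤ 1 by omega)
    rw [one_zsmul] at h2
    exact absurd (hM2.trans h2) (not_le.mpr hru)
  set M : ℕ := m'.toNat with hMdef
  have hMcast : (M:ℤ) = m' := Int.toNat_of_nonneg (by omega)
  have hM1' : 1 ≤ M := by omega
  -- k for t
  obtain ⟨k, ⟨hk1, hk2⟩, -⟩ := existsUnique_zsmul_near_of_pos hr0 t
  have hk0 : 0 ≤ k := by
    by_contra h
    push_neg at h
    have h2 : (k+1) • r ≤ (0:ℤ) • r := zsmul_le_zsmul_left hr0.le (show k + 1 ≤ 0 by omega)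
    rw [zero_zsmul] at h2
    exact absurd (lt_of_lt_of_le hk2 h2) (not_lt.mpr htI.1)
  set KN : ℕ := k.toNat with hKdef
  have hKcast : ((KN:ℤ)) = k := Int.toNat_of_nonneg hk0
  have hKr : ((KN:ℝ)) = ((k:ℤ):ℝ) := by rw [← hKcast]; push_cast; ring
  -- smul casts
  have hsmulcastK : (KN+1) • r = (k+1) • r := by
    rw [← natCast_zsmul, (show ((KN+1 : ℕ) : ℤ) = k + 1 by omega)]
  have hsmulcastM : M • r = m' • r := by
    rw [← natCast_zsmul, (show ((M : ℕ) : ℤ) = m' by omega)]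
  -- f bounds
  have hfk : ((k:ℤ):ℝ) * f r ≤ f t := by
    have := (hf _ _).mp hk1
    rwa [map_zsmul, zsmul_eq_mul] at this
  have hKbound : ((KN:ℝ)+1) * f r ≤ f t + f r := by
    rw [hKr]; ring_nf; ring_nf at hfk; linarith
  have hfM : 1 ≤ ((M:ℝ)+1) * f r := by
    have := (hf _ _).mp hM2
    rw [hfu, map_zsmul, zsmul_eq_mul] at this
    have hMr : (((m'+1 : ℤ)):ℝ) = (M:ℝ)+1 := by rw [← hMcast]; push_cast; ring
    rw [hMr] at this
    linarith
  -- s := (KN+1)•r is strictly above t and strictly below u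
  have hts : t < (KN+1) • r := by rw [hsmulcastK]; exact hk2
  have hsu : (KN+1) • r < u := by
    apply f_reflect_lt hf
    rw [hfu, map_nsmul, nsmul_eq_mul]
    push_cast
    have : ((KN:ℝ)+1) * f r ≤ f t + f r := hKbound
    linarith
  -- the witness element
  obtain ⟨e, he⟩ := hMd.nonempty r ⟨hr0.le, hru.le⟩
  obtain ⟨hzc, hzm, hzst⟩ := nsmul_exact hMd hu1.le hv0 hst ⟨hr0.le, hru.le⟩ he (KN+1) hsu
  have hMru : M • r < u := by rw [hsmulcastM]; exact hM1
  obtain ⟨hMc, hMm, hMst⟩ := nsmul_exact hMd hu1.le hv0 hst ⟨hr0.le, hru.le⟩ he M hMru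
  have hMe : (M:ℝ) * st e ≤ 1 := by rw [← hMst]; exact state_le_one hst hMc
  have hste0 : 0 ≤ st e := state_nonneg hst (hMd.subset _ ⟨hr0.le, hru.le⟩ he)
  have hxz : x ≤ (KN+1) • e :=
    hMd.mono t htI _ ⟨nsmul_nonneg hr0.le _, hsu.le⟩ hts x hx _ hzm
  have hstx : st x ≤ ((KN:ℝ)+1) * st e := by
    have := state_mono hst hxc hzc hxz
    rw [hzst] at this
    push_cast at this
    linarith
  -- arithmetic
  have hM0 : (0:ℝ) < (M:ℝ) := by exact_mod_cast hM1'
  have hfrδ : f r ≤ δ := hrδ.le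
  have hden : (0:ℝ) < 1 - f r := by linarith
  have h1 : st e ≤ 1 / (M:ℝ) := by rw [le_div_iff₀ hM0]; linarith
  have h2 : st x ≤ ((KN:ℝ)+1) / M := by
    calc st x ≤ ((KN:ℝ)+1) * st e := hstx
    _ ≤ ((KN:ℝ)+1) * (1/M) := by
        apply mul_le_mul_of_nonneg_left h1 (by positivity)
    _ = ((KN:ℝ)+1)/M := by ring
  have hK2 : ((KN:ℝ)+1) ≤ (f t + f r)/f r := by
    rw [le_div_iff₀ hfr0]; linarith
  have hM2' : (1 - f r)/f r ≤ (M:ℝ) := by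
    rw [div_le_iff₀ hfr0]; linarith
  have h3 : ((KN:ℝ)+1)/M ≤ (f t + f r)/(1 - f r) := by
    rw [div_le_div_iff₀ hM0 hden]
    calc ((KN:ℝ)+1) * (1 - f r) ≤ ((f t + f r)/f r) * (1 - f r) := by
          apply mul_le_mul_of_nonneg_right hK2 hden.le
    _ = (f t + f r) * ((1 - f r)/f r) := by ring
    _ ≤ (f t + f r) * M := by
          apply mul_le_mul_of_nonneg_left hM2' (by linarith)
  have h4 : (f t + f r)/(1 - f r) ≤ f t + 4*δ := by
    rw [div_le_iff₀ hden]
    have e1 : f r * f t ≤ f r := mul_le_of_le_one_right hfr0.le hft1.le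
    have e2 : δ * f r ≤ δ * (1/2) := by
      apply mul_le_mul_of_nonneg_left (by linarith) hδ0.le
    nlinarith [e1, e2, hfrδ, hδhalf, hft0, hfr0.le]
  have := h2.trans (h3.trans h4)
  linarith

lemma caseB_state_eq (hMd : IsDecomposition u v Md) (hu1 : 0 < u) (hv0 : 0 ≤ v)
    (hst : IsState v st) {f : H →+ ℝ} (hf : ∀ a b : H, a ≤ b ↔ f a ≤ f b) (hfu : f u = 1)
    (harch : ∀ x y : H, 0 < y → ∃ n : ℕ, x ≤ n • y)
    (hnomin : ∀ t : H, 0 < t → ∃ s : H, 0 < s ∧ s < t) :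
    ∀ t ∈ Set.Icc (0:H) u, ∀ x ∈ Md t, st x = f t := by
  have hsmall := small_elements hf hfu hu1 hnomin
  intro t htI x hx
  have hxc := hMd.subset _ htI hx
  rcases eq_or_lt_of_le htI.2 with heq | htu
  · subst heq
    rw [hfu]
    exact class_u_state hMd hu1 hv0 hst hx
  · have hup := caseB_upper hMd hu1 hv0 hst hf hfu harch hsmall t htI htu x hx
    rcases eq_or_lt_of_le htI.1 with heq0 | ht0
    · rw [← heq0] at hup ⊢
      rw [map_zero] at hup ⊢
      have := state_nonneg hst hxc
      linarith
    · have hnx : negR v x ∈ Md (u - t) := negR_mem hMd htI hx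
      have hsubI : u - t ∈ Set.Icc (0:H) u :=
        ⟨sub_nonneg.mpr htI.2, sub_le_self u htI.1⟩
      have hsubu : u - t < u := sub_lt_self u ht0
      have hup2 := caseB_upper hMd hu1 hv0 hst hf hfu harch hsmall (u-t) hsubI hsubu _ hnx
      have hcompl := state_compl hst hxc
      rw [map_sub, hfu] at hup2
      linarith

/-- uniqueness: any state equals `f ∘ tau` on classes -/
lemma state_eq_f (hMd : IsDecomposition u v Md) (hu1 : 0 < u) (hv0 : 0 ≤ v)
    (hst : IsState v st) {f : H →+ ℝ} (hf : ∀ a b : H, a ≤ b ↔ f a ≤ f b) (hfu : f u = 1)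
    (harch : ∀ x y : H, 0 < y → ∃ n : ℕ, x ≤ n • y) :
    ∀ t ∈ Set.Icc (0:H) u, ∀ x ∈ Md t, st x = f t := by
  by_cases hmin : ∃ t₀ : H, 0 < t₀ ∧ ∀ s : H, 0 < s → t₀ ≤ s
  · obtain ⟨t₀, h1, h2⟩ := hmin
    exact caseA_state_eq hMd hu1 hv0 hst hf hfu harch h1 h2
  · push_neg at hmin
    have hnomin : ∀ t : H, 0 < t → ∃ s : H, 0 < s ∧ s < t := by
      intro t ht
      obtain ⟨s, hs1, hs2⟩ := hmin t ht
      exact ⟨s, hs1, hs2⟩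
    exact caseB_state_eq hMd hu1 hv0 hst hf hfu harch hnomin

/-- a state with kernel `Md 0` gives (★) -/
lemma state_ker_to_star (hMd : IsDecomposition u v Md) (hu0 : 0 ≤ u) (hv0 : 0 ≤ v)
    (hst : IsState v st) (hker : stateKer v st = Md 0) :
    0 < u ∧ ∀ t : H, 0 < t → t ≤ u → ∃ n : ℕ, u ≤ n • t := by
  have hu1 : 0 < u := by
    rcases eq_or_lt_of_le hu0 with h | h
    · exfalso
      have hvu : v ∈ Md u := v_mem_class_u hMd hu0 hv0
      have hv0' : v ∈ Md 0 := by rwa [← h] at hvu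
      have hk : v ∈ stateKer v st := by rw [hker]; exact hv0'
      have := hk.2
      rw [hst.map_unit] at this
      norm_num at this
    · exact h
  refine ⟨hu1, ?_⟩
  intro t ht0 htu
  by_contra hc
  push_neg at hc
  obtain ⟨x, hx⟩ := hMd.nonempty t ⟨ht0.le, htu⟩
  have hxc := hMd.subset _ ⟨ht0.le, htu⟩ hx
  have hxst : st x = 0 := by
    have key : ∀ n : ℕ, (n:ℝ) * st x ≤ 1 := fun n => by
      obtain ⟨hc', -, hs⟩ := nsmul_exact hMd hu1.le hv0 hst ⟨ht0.le, htu⟩ hx n (hc n)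
      rw [← hs]
      exact state_le_one hst hc'
    by_contra hne
    have hpos : 0 < st x := lt_of_le_of_ne (state_nonneg hst hxc) (Ne.symm hne)
    obtain ⟨n, hn⟩ := exists_nat_gt (1/st x)
    have := key n
    rw [div_lt_iff₀ hpos] at hn
    linarith
  have hx0 : x ∈ Md 0 := by
    rw [← hker]
    exact ⟨hxc, hxst⟩
  exact absurd (class_unique hMd ⟨le_rfl, hu1.le⟩ ⟨ht0.le, htu⟩ hx0 hx).symm (ne_of_gt ht0)

end UniqueB

end StmtAux

open PseudoMV in
/-- Theorem 3.4: `M₀` is maximal iff `(H,u)` embeds as a unital ordered group onto a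
subgroup `(ℍ,1)` of `(ℝ,1)` iff `M` has a unique state `s` with `Ker(s) = M₀`. -/
theorem stmt_4 {H : Type*} [AddCommGroup H] [LinearOrder H] [IsOrderedAddMonoid H] {K : Type*} [Lattice K] [AddGroup K]
    [CovariantClass K K (· + ·) (· ≤ ·)] [CovariantClass K K (Function.swap (· + ·)) (· ≤ ·)]
    (u : H) (hu : IsStrongUnit u) (v : K) (hv : IsStrongUnit v)
    (Md : H → Set K) (hMd : IsDecomposition u v Md) :
    (IsMaximalIdeal v (Md 0) ↔
      ∃ f : H →+ ℝ, (∀ a b : H, a ≤ b ↔ f a ≤ f b) ∧ f u = 1) ∧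
    (IsMaximalIdeal v (Md 0) ↔
      ∃ st : K → ℝ, IsState v st ∧ stateKer v st = Md 0 ∧
        ∀ st' : K → ℝ, IsState v st' → ∀ x ∈ carrier v, st' x = st x) := by
  have hu0 : 0 ≤ u := hu.1
  have hv0 : 0 ≤ v := hv.1
  constructor
  · constructor
    · intro hmax
      have hu1 := StmtAux.maximal_to_upos hMd hu0 hv0 hmax
      have hstar := StmtAux.maximal_to_star hMd hu0 hv0 hmax
      have harch := StmtAux.star_to_arch hu hu1 hstar
      exact StmtAux.holder_embedding hu1 harch
    · rintro ⟨f, hf, hfu⟩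
      have hu1 : 0 < u := by
        have h1 : f 0 < f u := by rw [map_zero, hfu]; norm_num
        exact StmtAux.f_reflect_lt hf h1
      have hstar : ∀ t : H, 0 < t → t ≤ u → ∃ n : ℕ, u ≤ n • t := by
        intro t ht0 htu
        have hft : 0 < f t := by
          have := StmtAux.f_strict hf ht0
          rwa [map_zero] at this
        obtain ⟨n, hn⟩ := exists_nat_gt (1 / f t)
        refine ⟨n, ?_⟩
        rw [hf, map_nsmul, nsmul_eq_mul, hfu]
        rw [div_lt_iff₀ hft] at hn
        linarith
      exact StmtAux.star_to_maximal hMd hv0 hu1 hstar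
  · constructor
    · intro hmax
      have hu1 := StmtAux.maximal_to_upos hMd hu0 hv0 hmax
      have hstar := StmtAux.maximal_to_star hMd hu0 hv0 hmax
      have harch := StmtAux.star_to_arch hu hu1 hstar
      obtain ⟨f, hf, hfu⟩ := StmtAux.holder_embedding hu1 harch
      refine ⟨fun x => f (StmtAux.tau u Md x), ⟨?_, ?_, ?_⟩, ?_, ?_⟩
      · intro x hx
        obtain ⟨htI, -⟩ := StmtAux.tau_spec hMd hx
        constructor
        · have := (hf 0 _).mp htI.1
          rwa [map_zero] at this
        · have := (hf _ u).mp htI.2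
          rwa [hfu] at this
      · rw [StmtAux.tau_eq hMd ⟨hu0, le_rfl⟩ (StmtAux.v_mem_class_u hMd hu0 hv0), hfu]
      · intro x hx y hy hxy
        obtain ⟨hI, hm⟩ := StmtAux.tau_add hMd hx hy hxy.1 hxy.2
        have heq : StmtAux.tau u Md (x+y) = StmtAux.tau u Md x + StmtAux.tau u Md y :=
          StmtAux.tau_eq hMd hI hm
        rw [heq, map_add]
      · ext x
        simp only [stateKer, Set.mem_setOf_eq]
        constructor
        · rintro ⟨hxc, hx0⟩
          obtain ⟨htI, htm⟩ := StmtAux.tau_spec hMd hxc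
          have htau0 : StmtAux.tau u Md x = 0 := by
            by_contra hne
            have hpos : 0 < StmtAux.tau u Md x := lt_of_le_of_ne htI.1 (Ne.symm hne)
            have := StmtAux.f_strict hf hpos
            rw [map_zero] at this
            linarith
          rwa [htau0] at htm
        · intro hx
          have hxc : x ∈ carrier v := hMd.subset 0 ⟨le_rfl, hu0⟩ hx
          refine ⟨hxc, ?_⟩
          rw [StmtAux.tau_eq hMd ⟨le_rfl, hu0⟩ hx, map_zero]
      · intro st' hst' x hx
        obtain ⟨htI, htm⟩ := StmtAux.tau_spec hMd hx
        exact StmtAux.state_eq_f hMd hu1 hv0 hst' hf hfu harch _ htI x htm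
    · rintro ⟨st, hst, hker, -⟩
      obtain ⟨hu1, hstar⟩ := StmtAux.state_ker_to_star hMd hu0 hv0 hst hker
      exact StmtAux.star_to_maximal hMd hv0 hu1 hstar
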